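/- Suppose f : Δ = [a,b] × [c,d] → ℝ is convex on the co-ordinates and integrable, and define H(t,s) = (1/((b-a)(d-c))) ∫_a^b ∫_c^d f(tx + (1-t)(a+b)/2, sy + (1-s)(c+d)/2) dx dy. Then sup over (t,s) ∈ [0,1]² of H(t,s) equals H(1,1) = (1/((b-a)(d-c))) ∫_a^b ∫_c^d f(x,y) dx dy and inf over (t,s) ∈ [0,1]² of H(t,s) equals H(0,0) = f((a+b)/2, (c+d)/2). -/

import Mathlib

open MeasureTheory

def CoordConvexOn (a b c d : ℝ) (f : ℝ → ℝ → ℝ) : Prop :=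
  (∀ y ∈ Set.Icc c d, ConvexOn ℝ (Set.Icc a b) (fun x => f x y)) ∧
  (∀ x ∈ Set.Icc a b, ConvexOn ℝ (Set.Icc c d) (fun y => f x y))

/-- The Dragomir mapping `H` associated to `f` on `[a,b] × [c,d]`. -/
noncomputable def Hmap (a b c d : ℝ) (f : ℝ → ℝ → ℝ) (t s : ℝ) : ℝ :=
  (1 / ((b - a) * (d - c))) *
    ∫ x in a..b, ∫ y in c..d,
      f (t * x + (1 - t) * (a + b) / 2) (s * y + (1 - s) * (c + d) / 2)

lemma affine_mem' {a b t x : ℝ} (ht : t ∈ Set.Icc (0:ℝ) 1) (hx : x ∈ Set.Icc a b) :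
    t * x + (1 - t) * ((a + b) / 2) ∈ Set.Icc a b := by
  obtain ⟨ht0, ht1⟩ := ht; obtain ⟨hx1, hx2⟩ := hx
  constructor <;> nlinarith

lemma convexOn_intervalIntegrable' {a b : ℝ} {g : ℝ → ℝ} (hab : a ≤ b)
    (hg : ConvexOn ℝ (Set.Icc a b) g) : IntervalIntegrable g volume a b := by
  rw [intervalIntegrable_iff, Set.uIoc_of_le hab]
  have ha : a ∈ Set.Icc a b := ⟨le_refl a, hab⟩
  have hb : b ∈ Set.Icc a b := ⟨hab, le_refl b⟩
  have hm : (a + b) / 2 ∈ Set.Icc a b := ⟨by linarith, by linarith⟩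
  set M : ℝ := max (g a) (g b) with hM
  have hup : ∀ x ∈ Set.Icc a b, g x ≤ M := fun x hx => hg.le_max_of_mem_Icc ha hb hx
  have hlo : ∀ x ∈ Set.Icc a b, 2 * g ((a + b) / 2) - M ≤ g x := by
    intro x hx
    have hx' : a + b - x ∈ Set.Icc a b := ⟨by linarith [hx.2], by linarith [hx.1]⟩
    have h2 := hg.2 hx hx' (by norm_num : (0:ℝ) ≤ 1/2) (by norm_num : (0:ℝ) ≤ 1/2) (by norm_num)
    have e : (1/2 : ℝ) • x + (1/2 : ℝ) • (a + b - x) = (a + b) / 2 := by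
      simp only [smul_eq_mul]; ring
    rw [e] at h2
    have := hup _ hx'
    simp only [smul_eq_mul] at h2
    linarith
  have hbd : ∀ x ∈ Set.Ioo a b, ‖g x‖ ≤ |M| + |2 * g ((a + b) / 2) - M| := by
    intro x hx
    have hx' : x ∈ Set.Icc a b := ⟨hx.1.le, hx.2.le⟩
    have h1 := hup x hx'
    have h2 := hlo x hx'
    rw [Real.norm_eq_abs, abs_le]
    constructor
    · have := neg_abs_le (2 * g ((a + b) / 2) - M)
      have := abs_nonneg M
      linarith
    · have := le_abs_self M
      have := abs_nonneg (2 * g ((a + b) / 2) - M)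
      linarith
  have hcont : ContinuousOn g (Set.Ioo a b) := by
    have := hg.continuousOn_interior
    rwa [interior_Icc] at this
  have hmeas : AEStronglyMeasurable g (volume.restrict (Set.Ioo a b)) :=
    hcont.aestronglyMeasurable measurableSet_Ioo
  rw [integrableOn_Ioc_iff_integrableOn_Ioo (f := g) (μ := volume) (a := a) (b := b)]
  refine ⟨hmeas, ?_⟩
  exact HasFiniteIntegral.restrict_of_bounded (C := |M| + |2 * g ((a + b) / 2) - M|)
    measure_Ioo_lt_top (ae_restrict_of_forall_mem measurableSet_Ioo hbd)

lemma convexOn_comp_affine' {a b t : ℝ} {g : ℝ → ℝ} (ht : t ∈ Set.Icc (0:ℝ) 1)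
    (hg : ConvexOn ℝ (Set.Icc a b) g) :
    ConvexOn ℝ (Set.Icc a b) (fun x => g (t * x + (1 - t) * ((a + b) / 2))) := by
  refine ⟨convex_Icc a b, fun x hx y hy α β hα hβ hαβ => ?_⟩
  have h := hg.2 (affine_mem' ht hx) (affine_mem' ht hy) hα hβ hαβ
  have e : t * (α • x + β • y) + (1 - t) * ((a + b) / 2) =
      α • (t * x + (1 - t) * ((a + b) / 2)) + β • (t * y + (1 - t) * ((a + b) / 2)) := by
    simp only [smul_eq_mul]
    have hβ' : β = 1 - α := by linarith
    rw [hβ']; ring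
  dsimp only
  rw [e]
  exact h

lemma lower_1d {a b t : ℝ} {g : ℝ → ℝ} (hab : a < b) (ht : t ∈ Set.Icc (0:ℝ) 1)
    (hg : ConvexOn ℝ (Set.Icc a b) g) :
    (b - a) * g ((a + b) / 2) ≤ ∫ x in a..b, g (t * x + (1 - t) * ((a + b) / 2)) := by
  have hint1 : IntervalIntegrable (fun x => g (t * x + (1 - t) * ((a + b) / 2))) volume a b :=
    convexOn_intervalIntegrable' hab.le (convexOn_comp_affine' ht hg)
  have hint2 : IntervalIntegrable (fun x => g (t * (a + b - x) + (1 - t) * ((a + b) / 2)))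
      volume a b := by
    have h2 := (hint1.comp_sub_left (a + b)).symm
    simpa using h2
  have e1 : (∫ x in a..b, g (t * (a + b - x) + (1 - t) * ((a + b) / 2)))
      = ∫ x in a..b, g (t * x + (1 - t) * ((a + b) / 2)) := by
    have := intervalIntegral.integral_comp_sub_left (a := a) (b := b)
      (fun y => g (t * y + (1 - t) * ((a + b) / 2))) (a + b)
    simpa using this
  have key : ∀ x ∈ Set.Icc a b, 2 * g ((a + b) / 2) ≤
      g (t * x + (1 - t) * ((a + b) / 2)) + g (t * (a + b - x) + (1 - t) * ((a + b) / 2)) := by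
    intro x hx
    have hx' : a + b - x ∈ Set.Icc a b := ⟨by linarith [hx.2], by linarith [hx.1]⟩
    have h2 := hg.2 (affine_mem' ht hx) (affine_mem' ht hx')
      (by norm_num : (0:ℝ) ≤ 1/2) (by norm_num : (0:ℝ) ≤ 1/2) (by norm_num)
    have e : (1/2 : ℝ) • (t * x + (1 - t) * ((a + b) / 2))
        + (1/2 : ℝ) • (t * (a + b - x) + (1 - t) * ((a + b) / 2)) = (a + b) / 2 := by
      simp only [smul_eq_mul]; ring
    rw [e] at h2
    simp only [smul_eq_mul] at h2
    linarith
  have hmono := intervalIntegral.integral_mono_on hab.le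
    (intervalIntegrable_const (c := 2 * g ((a + b) / 2))) (hint1.add hint2) key
  rw [intervalIntegral.integral_const, intervalIntegral.integral_add hint1 hint2, e1,
    smul_eq_mul] at hmono
  linarith

lemma lower_1d' {a b : ℝ} {g : ℝ → ℝ} (hab : a < b)
    (hg : ConvexOn ℝ (Set.Icc a b) g) :
    (b - a) * g ((a + b) / 2) ≤ ∫ x in a..b, g x := by
  have := lower_1d hab (t := 1) ⟨zero_le_one, le_refl 1⟩ hg
  simpa using this

lemma upper_1d {a b t : ℝ} {g : ℝ → ℝ} (hab : a < b) (ht : t ∈ Set.Icc (0:ℝ) 1)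
    (hg : ConvexOn ℝ (Set.Icc a b) g) :
    (∫ x in a..b, g (t * x + (1 - t) * ((a + b) / 2))) ≤ ∫ x in a..b, g x := by
  have hm : (a + b) / 2 ∈ Set.Icc a b := ⟨by linarith, by linarith⟩
  have hintg : IntervalIntegrable g volume a b := convexOn_intervalIntegrable' hab.le hg
  have hint1 : IntervalIntegrable (fun x => g (t * x + (1 - t) * ((a + b) / 2))) volume a b :=
    convexOn_intervalIntegrable' hab.le (convexOn_comp_affine' ht hg)
  have key : ∀ x ∈ Set.Icc a b, g (t * x + (1 - t) * ((a + b) / 2))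
      ≤ t * g x + (1 - t) * g ((a + b) / 2) := by
    intro x hx
    have h2 := hg.2 hx hm (show (0:ℝ) ≤ t from ht.1)
      (show (0:ℝ) ≤ 1 - t from by linarith [ht.2]) (show t + (1 - t) = 1 from by ring)
    simpa [smul_eq_mul] using h2
  have hmono := intervalIntegral.integral_mono_on hab.le hint1
    ((hintg.const_mul t).add (intervalIntegrable_const (c := (1 - t) * g ((a + b) / 2)))) key
  rw [intervalIntegral.integral_add (hintg.const_mul t)
    (intervalIntegrable_const (c := (1 - t) * g ((a + b) / 2))),
    intervalIntegral.integral_const_mul, intervalIntegral.integral_const, smul_eq_mul] at hmono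
  have hHH := lower_1d' hab hg
  nlinarith [ht.1, ht.2]

lemma F_convex {a b c d s : ℝ} {f : ℝ → ℝ → ℝ} (hcd : c ≤ d) (hs : s ∈ Set.Icc (0:ℝ) 1)
    (hf : CoordConvexOn a b c d f) :
    ConvexOn ℝ (Set.Icc a b) (fun u => ∫ y in c..d, f u (s * y + (1 - s) * ((c + d) / 2))) := by
  refine ⟨convex_Icc a b, fun u hu v hv α β hα hβ hαβ => ?_⟩
  dsimp only
  have hmem : ∀ ⦃w : ℝ⦄, w ∈ Set.Icc a b →
      IntervalIntegrable (fun y => f w (s * y + (1 - s) * ((c + d) / 2))) volume c d :=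
    fun w hw => convexOn_intervalIntegrable' hcd (convexOn_comp_affine' hs (hf.2 w hw))
  have huv : α • u + β • v ∈ Set.Icc a b := (convex_Icc a b) hu hv hα hβ hαβ
  have key : ∀ y ∈ Set.Icc c d, f (α • u + β • v) (s * y + (1 - s) * ((c + d) / 2))
      ≤ α * f u (s * y + (1 - s) * ((c + d) / 2)) + β * f v (s * y + (1 - s) * ((c + d) / 2)) := by
    intro y hy
    have := (hf.1 _ (affine_mem' hs hy)).2 hu hv hα hβ hαβ
    simpa [smul_eq_mul] using this
  have h1 := intervalIntegral.integral_mono_on hcd (hmem huv)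
    (((hmem hu).const_mul α).add ((hmem hv).const_mul β)) key
  rw [intervalIntegral.integral_add ((hmem hu).const_mul α) ((hmem hv).const_mul β),
    intervalIntegral.integral_const_mul, intervalIntegral.integral_const_mul] at h1
  simpa [smul_eq_mul] using h1

theorem stmt14 (a b c d : ℝ) (hab : a < b) (hcd : c < d) (f : ℝ → ℝ → ℝ)
    (hf : CoordConvexOn a b c d f)
    (hint : IntegrableOn (fun q : ℝ × ℝ => f q.1 q.2) (Set.Icc a b ×ˢ Set.Icc c d)) :
    (∀ t ∈ Set.Icc (0:ℝ) 1, ∀ s ∈ Set.Icc (0:ℝ) 1,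
        Hmap a b c d f t s ≤ Hmap a b c d f 1 1) ∧
    Hmap a b c d f 1 1 = (1 / ((b - a) * (d - c))) * (∫ x in a..b, ∫ y in c..d, f x y) ∧
    (∀ t ∈ Set.Icc (0:ℝ) 1, ∀ s ∈ Set.Icc (0:ℝ) 1,
        Hmap a b c d f 0 0 ≤ Hmap a b c d f t s) ∧
    Hmap a b c d f 0 0 = f ((a + b) / 2) ((c + d) / 2) := by
  have hn : (c + d) / 2 ∈ Set.Icc c d := ⟨by linarith, by linarith⟩
  have hvolpos : (0:ℝ) < (b - a) * (d - c) := mul_pos (by linarith) (by linarith)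
  have hc0 : (0:ℝ) ≤ 1 / ((b - a) * (d - c)) := (one_div_pos.mpr hvolpos).le
  have hvol : (b - a) * (d - c) ≠ 0 := ne_of_gt hvolpos
  -- rewrite Hmap to the normalized form
  have hHmap : ∀ t s : ℝ, Hmap a b c d f t s = (1 / ((b - a) * (d - c))) *
      ∫ x in a..b, ∫ y in c..d,
        f (t * x + (1 - t) * ((a + b) / 2)) (s * y + (1 - s) * ((c + d) / 2)) := by
    intro t s
    simp only [Hmap, mul_div_assoc]
  -- H(1,1)
  have hH11 : Hmap a b c d f 1 1
      = (1 / ((b - a) * (d - c))) * ∫ x in a..b, ∫ y in c..d, f x y := by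
    rw [hHmap]; norm_num
  -- H(0,0)
  have hH00 : Hmap a b c d f 0 0 = f ((a + b) / 2) ((c + d) / 2) := by
    rw [hHmap]
    simp only [zero_mul, zero_add, sub_zero, one_mul, intervalIntegral.integral_const,
      smul_eq_mul]
    rw [show (b - a) * ((d - c) * f ((a + b) / 2) ((c + d) / 2))
        = ((b - a) * (d - c)) * f ((a + b) / 2) ((c + d) / 2) from by ring,
      one_div, inv_mul_cancel_left₀ hvol]
  refine ⟨?_, hH11, ?_, hH00⟩
  · -- upper bound
    intro t ht s hs
    rw [hHmap, hH11]
    apply mul_le_mul_of_nonneg_left _ hc0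
    have hFconv := F_convex hcd.le hs hf
    have hGconv : ConvexOn ℝ (Set.Icc a b) (fun u => ∫ y in c..d, f u y) := by
      have := F_convex (s := 1) hcd.le ⟨zero_le_one, le_refl 1⟩ hf
      simpa using this
    calc (∫ x in a..b, ∫ y in c..d,
          f (t * x + (1 - t) * ((a + b) / 2)) (s * y + (1 - s) * ((c + d) / 2)))
        ≤ ∫ x in a..b, ∫ y in c..d, f (t * x + (1 - t) * ((a + b) / 2)) y := by
          apply intervalIntegral.integral_mono_on hab.le
            (convexOn_intervalIntegrable' hab.le (convexOn_comp_affine' ht hFconv))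
            (convexOn_intervalIntegrable' hab.le (convexOn_comp_affine' ht hGconv))
          intro x hx
          exact upper_1d hcd hs (hf.2 _ (affine_mem' ht hx))
      _ ≤ ∫ x in a..b, ∫ y in c..d, f x y := upper_1d hab ht hGconv
  · -- lower bound
    intro t ht s hs
    rw [hH00, hHmap]
    have hFconv := F_convex hcd.le hs hf
    have step : (b - a) * ((d - c) * f ((a + b) / 2) ((c + d) / 2))
        ≤ ∫ x in a..b, ∫ y in c..d,
          f (t * x + (1 - t) * ((a + b) / 2)) (s * y + (1 - s) * ((c + d) / 2)) := by
      have hconvn : ConvexOn ℝ (Set.Icc a b) (fun u => (d - c) * f u ((c + d) / 2)) := by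
        refine ⟨convex_Icc a b, fun x hx y hy α β hα hβ hαβ => ?_⟩
        have h1 := (hf.1 _ hn).2 hx hy hα hβ hαβ
        have h2 := mul_le_mul_of_nonneg_left h1 (show (0:ℝ) ≤ d - c by linarith)
        simp only [smul_eq_mul] at h2 ⊢
        nlinarith [h2]
      calc (b - a) * ((d - c) * f ((a + b) / 2) ((c + d) / 2))
          ≤ ∫ x in a..b, (d - c) * f (t * x + (1 - t) * ((a + b) / 2)) ((c + d) / 2) :=
            lower_1d hab ht hconvn
        _ ≤ ∫ x in a..b, ∫ y in c..d,
            f (t * x + (1 - t) * ((a + b) / 2)) (s * y + (1 - s) * ((c + d) / 2)) := by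
            apply intervalIntegral.integral_mono_on hab.le
              (convexOn_intervalIntegrable' hab.le (convexOn_comp_affine' ht hconvn))
              (convexOn_intervalIntegrable' hab.le (convexOn_comp_affine' ht hFconv))
            intro x hx
            exact lower_1d hcd hs (hf.2 _ (affine_mem' ht hx))
    calc f ((a + b) / 2) ((c + d) / 2)
        = (1 / ((b - a) * (d - c))) * ((b - a) * ((d - c) * f ((a + b) / 2) ((c + d) / 2))) := by
          rw [show (b - a) * ((d - c) * f ((a + b) / 2) ((c + d) / 2))
              = ((b - a) * (d - c)) * f ((a + b) / 2) ((c + d) / 2) from by ring,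
            one_div, inv_mul_cancel_left₀ hvol]
      _ ≤ _ := mul_le_mul_of_nonneg_left step hc0
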